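/- Let T be a real trigonometric polynomial of degree at most n satisfying |T(θ)| ≤ 1 for all θ. Then for all θ, T'(θ)² + n²·T(θ)² ≤ n². -/

import Mathlib

open Real Finset

lemma exists_zero_of_mul_neg {f : ℝ → ℝ} (hf : Continuous f) {x y : ℝ} (hxy : x < y)
    (h : f x * f y < 0) : ∃ c ∈ Set.Ioo x y, f c = 0 := by
  rcases lt_trichotomy (f x) 0 with hx | hx | hx
  · have hy : 0 < f y := by nlinarith
    have := intermediate_value_Ioo hxy.le hf.continuousOn (Set.mem_Ioo.2 ⟨hx, hy⟩)
    obtain ⟨c, hc, hc0⟩ := this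
    exact ⟨c, hc, hc0⟩
  · simp [hx] at h
  · have hy : f y < 0 := by nlinarith
    have := intermediate_value_Ioo' hxy.le hf.continuousOn (Set.mem_Ioo.2 ⟨hy, hx⟩)
    obtain ⟨c, hc, hc0⟩ := this
    exact ⟨c, hc, hc0⟩

lemma trig_hasDerivAt (n : ℕ) (a b : ℕ → ℝ) (x : ℝ) :
    HasDerivAt (fun θ : ℝ => a 0 + ∑ k ∈ Finset.Icc 1 n,
        (a k * Real.cos ((k : ℝ) * θ) + b k * Real.sin ((k : ℝ) * θ)))
      (∑ k ∈ Finset.Icc 1 n,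
        (a k * (-Real.sin ((k : ℝ) * x) * k) + b k * (Real.cos ((k : ℝ) * x) * k))) x := by
  apply HasDerivAt.const_add
  apply HasDerivAt.fun_sum
  intro k _
  have hlin : HasDerivAt (fun θ : ℝ => (k : ℝ) * θ) (k : ℝ) x := by
    simpa using (hasDerivAt_id x).const_mul (k : ℝ)
  have hc : HasDerivAt (fun θ : ℝ => Real.cos ((k : ℝ) * θ))
      (-Real.sin ((k : ℝ) * x) * k) x :=
    (Real.hasDerivAt_cos ((k : ℝ) * x)).comp x hlin
  have hs : HasDerivAt (fun θ : ℝ => Real.sin ((k : ℝ) * θ))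
      (Real.cos ((k : ℝ) * x) * k) x :=
    (Real.hasDerivAt_sin ((k : ℝ) * x)).comp x hlin
  exact ((hc.const_mul (a k)).add (hs.const_mul (b k))).congr_deriv (by ring)

open Real Finset Polynomial

lemma trig_to_poly (n : ℕ) (a b : ℕ → ℝ) :
    ∃ P : Polynomial ℂ, P.natDegree ≤ 2 * n ∧ ∀ θ : ℝ,
      P.eval (Complex.exp (θ * Complex.I)) =
        Complex.exp ((n : ℂ) * θ * Complex.I) *
          ((a 0 : ℂ) + ∑ k ∈ Finset.Icc 1 n,
            ((a k : ℂ) * (Real.cos ((k : ℝ) * θ) : ℝ) + (b k : ℂ) * (Real.sin ((k : ℝ) * θ) : ℝ))) := by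
  refine ⟨C (a 0 : ℂ) * X ^ n + ∑ k ∈ Finset.Icc 1 n,
      (C (((a k : ℂ) - (b k : ℂ) * Complex.I) / 2) * X ^ (n + k)
        + C (((a k : ℂ) + (b k : ℂ) * Complex.I) / 2) * X ^ (n - k)), ?_, ?_⟩
  · apply (natDegree_add_le _ _).trans
    apply max_le
    · exact (natDegree_C_mul_X_pow_le _ _).trans (by omega)
    · apply natDegree_sum_le_of_forall_le
      intro k hk
      have hk' : k ≤ n := (Finset.mem_Icc.1 hk).2
      apply (natDegree_add_le _ _).trans
      apply max_le
      · exact (natDegree_C_mul_X_pow_le _ _).trans (by omega)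
      · exact (natDegree_C_mul_X_pow_le _ _).trans (by omega)
  · intro θ
    have hexp : ∀ x : ℝ, Complex.exp ((x : ℂ) * Complex.I)
        = (Real.cos x : ℂ) + (Real.sin x : ℂ) * Complex.I := by
      intro x
      rw [Complex.exp_mul_I, Complex.ofReal_cos, Complex.ofReal_sin]
    have hpow : ∀ m : ℕ, Complex.exp ((θ : ℂ) * Complex.I) ^ m
        = Complex.exp ((m : ℂ) * θ * Complex.I) := by
      intro m
      rw [← Complex.exp_nat_mul]
      ring_nf
    simp only [eval_add, eval_mul, eval_pow, eval_C, eval_X, eval_finset_sum]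
    rw [hpow n, mul_add, Finset.mul_sum]
    congr 1
    · rw [mul_comm]
    · apply Finset.sum_congr rfl
      intro k hk
      obtain ⟨hk1, hk2⟩ := Finset.mem_Icc.1 hk
      rw [hpow (n + k), hpow (n - k)]
      have h1 : ((n + k : ℕ) : ℂ) * θ * Complex.I = (n : ℂ) * θ * Complex.I + ((k : ℝ) * θ : ℝ) * Complex.I := by
        push_cast; ring
      have h2 : ((n - k : ℕ) : ℂ) * θ * Complex.I = (n : ℂ) * θ * Complex.I + (-((k : ℝ) * θ) : ℝ) * Complex.I := by
        push_cast [Nat.cast_sub hk2]; ring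
      rw [h1, h2, Complex.exp_add, Complex.exp_add, hexp, hexp]
      rw [Real.cos_neg, Real.sin_neg]
      push_cast
      ring_nf
      rw [Complex.I_sq]
      ring

open Real Finset Polynomial

set_option maxHeartbeats 1000000 in
theorem stmt9' (n : ℕ) (T : ℝ → ℝ)
    (hT : ∃ a b : ℕ → ℝ, ∀ θ : ℝ,
      T θ = a 0 + ∑ k ∈ Finset.Icc 1 n,
        (a k * Real.cos ((k : ℝ) * θ) + b k * Real.sin ((k : ℝ) * θ)))
    (hb : ∀ θ : ℝ, |T θ| ≤ 1) (θ : ℝ) :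
    (deriv T θ) ^ 2 + (n : ℝ) ^ 2 * (T θ) ^ 2 ≤ (n : ℝ) ^ 2 := by
  obtain ⟨a, b, ha⟩ := hT
  have hTg : T = fun x => a 0 + ∑ k ∈ Finset.Icc 1 n,
      (a k * Real.cos ((k : ℝ) * x) + b k * Real.sin ((k : ℝ) * x)) := funext ha
  rcases Nat.eq_zero_or_pos n with hn0 | hn
  · subst hn0
    have hconst : T = fun _ : ℝ => a 0 := by
      rw [hTg]; funext x; simp
    rw [hconst]
    simp
  -- main case
  have hnR : (0 : ℝ) < n := by exact_mod_cast hn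
  have hTd : ∀ x : ℝ, HasDerivAt T (∑ k ∈ Finset.Icc 1 n,
      (a k * (-Real.sin ((k : ℝ) * x) * k) + b k * (Real.cos ((k : ℝ) * x) * k))) x := by
    intro x
    have := trig_hasDerivAt n a b x
    rwa [← hTg] at this
  have hTcont : Continuous T := continuous_iff_continuousAt.2 fun x => (hTd x).continuousAt
  have hd : HasDerivAt T (deriv T θ) θ := by
    have h := hTd θ
    rwa [← h.deriv] at h
  by_contra hcontra
  push_neg at hcontra
  set c : ℝ := T θ with hc_def
  set d : ℝ := deriv T θ with hd_def
  set M : ℝ := Real.sqrt (c ^ 2 + (d / n) ^ 2) with hM_def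
  have hM2 : M ^ 2 = c ^ 2 + (d / n) ^ 2 := Real.sq_sqrt (by positivity)
  have h1 : 1 < c ^ 2 + (d / n) ^ 2 := by
    rw [div_pow, show c ^ 2 + d ^ 2 / (n : ℝ) ^ 2 = (d ^ 2 + (n:ℝ) ^ 2 * c ^ 2) / (n:ℝ) ^ 2 by
      field_simp; ring, lt_div_iff₀ (by positivity)]
    linarith [hcontra]
  have hM1 : 1 < M := by nlinarith [Real.sqrt_nonneg (c ^ 2 + (d / n) ^ 2), hM2]
  have hM0 : 0 < M := by linarith
  -- choose phase
  set z : ℂ := (↑(d / (n * M)) : ℂ) + (↑(c / M) : ℂ) * Complex.I with hz_def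
  have hzre : z.re = d / (n * M) := by
    simp only [hz_def, Complex.add_re, Complex.ofReal_re, Complex.mul_re, Complex.I_re,
      Complex.I_im, Complex.ofReal_im]
    ring
  have hzim : z.im = c / M := by
    simp only [hz_def, Complex.add_im, Complex.ofReal_im, Complex.mul_im, Complex.I_re,
      Complex.I_im, Complex.ofReal_re]
    ring
  have hnormSq : Complex.normSq z = 1 := by
    rw [Complex.normSq_apply, hzre, hzim]
    have : d / (n * M) * (d / (n * M)) + c / M * (c / M) = (c ^ 2 + (d / n) ^ 2) / M ^ 2 := by
      field_simp; ring
    rw [this, ← hM2, div_self (by positivity)]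
  have hzabs : ‖z‖ = 1 := by
    rw [Complex.norm_def, hnormSq, Real.sqrt_one]
  have hz0 : z ≠ 0 := by
    intro h; rw [h] at hzabs; simp at hzabs
  set ψ : ℝ := z.arg with hψ_def
  have hcosψ : Real.cos ψ = d / (n * M) := by
    rw [hψ_def, Complex.cos_arg hz0, hzabs, hzre]; simp
  have hsinψ : Real.sin ψ = c / M := by
    rw [hψ_def, Complex.sin_arg, hzabs, hzim]; simp
  set φ : ℝ := ψ - n * θ with hφ_def
  have hψeq : (n : ℝ) * θ + φ = ψ := by rw [hφ_def]; ring
  set R : ℝ → ℝ := fun x => M * Real.sin ((n : ℝ) * x + φ) - T x with hR_def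
  have hRθ : R θ = 0 := by
    simp only [hR_def, hψeq, hsinψ]
    field_simp [hc_def]
    exact sub_self _
  have hlin2 : ∀ x : ℝ, HasDerivAt (fun y : ℝ => (n : ℝ) * y + φ) (n : ℝ) x := by
    intro x
    simpa using ((hasDerivAt_id x).const_mul (n : ℝ)).add_const φ
  have hR' : HasDerivAt R 0 θ := by
    have hS : HasDerivAt (fun x : ℝ => M * Real.sin ((n : ℝ) * x + φ))
        (M * (Real.cos ((n : ℝ) * θ + φ) * n)) θ :=
      by have := (Real.hasDerivAt_sin ((n : ℝ) * θ + φ)).comp θ (hlin2 θ); exact this.const_mul M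
    have hv : M * (Real.cos ((n : ℝ) * θ + φ) * n) - d = 0 := by
      rw [hψeq, hcosψ]; field_simp; ring
    have := hS.sub hd
    rwa [hv] at this
  have hRcont : Continuous R :=
    (continuous_const.mul (Real.continuous_sin.comp ((continuous_const.mul continuous_id).add continuous_const))).sub hTcont
  -- R as trig poly
  set aR : ℕ → ℝ := fun k => (if k = n then M * Real.sin φ else 0) - a k with haR_def
  set bR : ℕ → ℝ := fun k => (if k = n then M * Real.cos φ else 0) - b k with hbR_def
  have hRrep : ∀ x : ℝ, R x = aR 0 + ∑ k ∈ Finset.Icc 1 n,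
      (aR k * Real.cos ((k : ℝ) * x) + bR k * Real.sin ((k : ℝ) * x)) := by
    intro x
    have hsplit : ∑ k ∈ Finset.Icc 1 n,
        (aR k * Real.cos ((k : ℝ) * x) + bR k * Real.sin ((k : ℝ) * x))
        = (∑ k ∈ Finset.Icc 1 n, (if k = n then
            M * Real.sin φ * Real.cos ((k : ℝ) * x) + M * Real.cos φ * Real.sin ((k : ℝ) * x)
            else 0))
          - ∑ k ∈ Finset.Icc 1 n,
            (a k * Real.cos ((k : ℝ) * x) + b k * Real.sin ((k : ℝ) * x)) := by
      rw [← Finset.sum_sub_distrib]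
      apply Finset.sum_congr rfl
      intro k _
      simp only [haR_def, hbR_def]
      split <;> ring
    have hs1 : ∑ k ∈ Finset.Icc 1 n, (if k = n then
        M * Real.sin φ * Real.cos ((k : ℝ) * x) + M * Real.cos φ * Real.sin ((k : ℝ) * x)
        else 0) = M * Real.sin φ * Real.cos ((n : ℝ) * x) + M * Real.cos φ * Real.sin ((n : ℝ) * x) := by
      rw [Finset.sum_ite_eq' (Finset.Icc 1 n) n]
      rw [if_pos (Finset.mem_Icc.2 ⟨hn, le_refl n⟩)]
    rw [hsplit, hs1]
    simp only [hR_def]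
    have haRx : aR 0 = -a 0 := by
      simp only [haR_def]; rw [if_neg (by omega : ¬ (0 = n))]; ring
    rw [haRx, ha x, Real.sin_add]
    ring
  obtain ⟨P, hPdeg, hPeval⟩ := trig_to_poly n aR bR
  have heval : ∀ x : ℝ, P.eval (Complex.exp (x * Complex.I))
      = Complex.exp ((n : ℂ) * x * Complex.I) * ((R x : ℝ) : ℂ) := by
    intro x
    rw [hPeval x, hRrep x]
    push_cast
    ring
  set z₀ : ℂ := Complex.exp ((θ : ℂ) * Complex.I) with hz₀_def
  -- P has a double root at z₀
  have hPz₀ : P.eval z₀ = 0 := by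
    rw [hz₀_def, heval θ, hRθ]
    simp
  have hP'z₀ : P.derivative.eval z₀ = 0 := by
    have hg1 : HasDerivAt (fun w : ℂ => Complex.exp (w * Complex.I))
        (Complex.exp ((θ:ℂ) * Complex.I) * Complex.I) ((θ:ℂ)) := by
      simpa using ((hasDerivAt_id ((θ:ℂ))).mul_const Complex.I).cexp
    have hchain : HasDerivAt (fun w : ℂ => P.eval (Complex.exp (w * Complex.I)))
        (P.derivative.eval (Complex.exp ((θ:ℂ) * Complex.I))
          * (Complex.exp ((θ:ℂ) * Complex.I) * Complex.I)) ((θ:ℂ)) :=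
      by have := HasDerivAt.comp ((θ:ℂ)) (P.hasDerivAt (Complex.exp ((θ:ℂ) * Complex.I))) hg1; exact this
    have hF1 : HasDerivAt (fun x : ℝ => P.eval (Complex.exp ((x:ℂ) * Complex.I)))
        (P.derivative.eval z₀ * (Complex.exp ((θ:ℂ) * Complex.I) * Complex.I)) θ :=
      hchain.comp_ofReal
    have hg2 : HasDerivAt (fun w : ℂ => Complex.exp ((n:ℂ) * w * Complex.I))
        ((n:ℂ) * Complex.I * Complex.exp ((n:ℂ) * (θ:ℂ) * Complex.I)) ((θ:ℂ)) := by
      have := ((((hasDerivAt_id ((θ:ℂ))).const_mul (n:ℂ)).mul_const Complex.I).cexp)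
      simpa [mul_comm, mul_assoc, mul_left_comm] using this
    have hRc : HasDerivAt (fun x : ℝ => ((R x : ℝ) : ℂ)) ((0:ℝ) : ℂ) θ := hR'.ofReal_comp
    have hF2 : HasDerivAt (fun x : ℝ => Complex.exp ((n:ℂ) * (x:ℝ) * Complex.I) * ((R x : ℝ) : ℂ))
        ((n:ℂ) * Complex.I * Complex.exp ((n:ℂ) * (θ:ℂ) * Complex.I) * ((R θ : ℝ) : ℂ)
          + Complex.exp ((n:ℂ) * (θ:ℂ) * Complex.I) * ((0:ℝ) : ℂ)) θ :=
      (hg2.comp_ofReal).mul hRc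
    have hfun : (fun x : ℝ => P.eval (Complex.exp ((x:ℂ) * Complex.I)))
        = fun x : ℝ => Complex.exp ((n:ℂ) * (x:ℝ) * Complex.I) * ((R x : ℝ) : ℂ) :=
      funext fun x => heval x
    rw [hfun] at hF1
    have huniq := hF1.unique hF2
    rw [hRθ] at huniq
    simp only [Complex.ofReal_zero, mul_zero, add_zero, zero_add] at huniq
    have hexp_ne : Complex.exp ((θ:ℂ) * Complex.I) ≠ 0 := Complex.exp_ne_zero _
    have : P.derivative.eval z₀ * (Complex.exp ((θ:ℂ) * Complex.I) * Complex.I) = 0 := huniq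
    rcases mul_eq_zero.1 this with h | h
    · exact h
    · exact absurd h (by simp [hexp_ne, Complex.I_ne_zero])
  -- sample points
  set j₀ : ℤ := ⌊((n:ℝ) * θ + φ - π/2)/π⌋ with hj₀_def
  set w : ℕ → ℝ := fun j => (π/2 + ((j₀ : ℝ) + (j:ℝ)) * π - φ)/n with hw_def
  have hπ : (0:ℝ) < π := Real.pi_pos
  have hwline : ∀ j : ℕ, (n:ℝ) * w j + φ = π/2 + ((j₀:ℝ) + (j:ℝ)) * π := by
    intro j
    simp only [hw_def]
    field_simp
    ring
  have hwlt : ∀ j : ℕ, w j < w (j + 1) := by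
    intro j
    simp only [hw_def]
    rw [div_lt_div_iff_of_pos_right hnR]
    push_cast
    nlinarith [hπ]
  have hwmono : StrictMono w := strictMono_nat_of_lt_succ hwlt
  have hw2n : w (2*n) = w 0 + 2*π := by
    simp only [hw_def]
    push_cast
    field_simp
    ring
  have hsinw : ∀ j : ℕ, Real.sin ((n:ℝ) * w j + φ) = (-1:ℝ)^(j₀ + (j:ℤ)) := by
    intro j
    rw [hwline j, show π/2 + ((j₀:ℝ) + (j:ℝ)) * π = π/2 + ((j₀ + (j:ℤ) : ℤ):ℝ) * π by
      push_cast; ring, Real.sin_add_int_mul_pi, Real.sin_pi_div_two, mul_one]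
  have hε : ∀ j : ℕ, (-1:ℝ)^(j₀ + (j:ℤ)) = 1 ∨ (-1:ℝ)^(j₀ + (j:ℤ)) = -1 := by
    intro j
    rcases Int.even_or_odd (j₀ + (j:ℤ)) with h | h
    · exact Or.inl h.neg_one_zpow
    · exact Or.inr h.neg_one_zpow
  have hflip : ∀ j : ℕ, (-1:ℝ)^(j₀ + ((j+1:ℕ):ℤ)) = -(-1:ℝ)^(j₀ + (j:ℤ)) := by
    intro j
    push_cast
    rw [show j₀ + ((j:ℤ) + 1) = (j₀ + (j:ℤ)) + 1 by ring,
      zpow_add_one₀ (by norm_num : (-1:ℝ) ≠ 0)]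
    ring
  have hRw : ∀ j : ℕ, R (w j) = M * (-1:ℝ)^(j₀ + (j:ℤ)) - T (w j) := by
    intro j
    simp only [hR_def]
    rw [hsinw j]
  have hsign : ∀ j : ℕ, 0 < (-1:ℝ)^(j₀ + (j:ℤ)) * R (w j) := by
    intro j
    have hT1 := abs_le.1 (hb (w j))
    rcases hε j with h | h <;> rw [hRw j, h] <;> nlinarith [hT1.1, hT1.2]
  have hRwne : ∀ j : ℕ, R (w j) ≠ 0 := by
    intro j hzero
    have := hsign j
    rw [hzero, mul_zero] at this
    exact lt_irrefl 0 this
  have hprod : ∀ j : ℕ, R (w j) * R (w (j+1)) < 0 := by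
    intro j
    have h1 := hsign j
    have h2 := hsign (j+1)
    rw [hflip j] at h2
    rcases hε j with h | h <;> rw [h] at h1 h2 <;> nlinarith
  have hζex : ∀ j : ℕ, ∃ x, x ∈ Set.Ioo (w j) (w (j+1)) ∧ R x = 0 := by
    intro j
    obtain ⟨x, hx1, hx2⟩ := exists_zero_of_mul_neg hRcont (hwlt j) (hprod j)
    exact ⟨x, hx1, hx2⟩
  choose ζ hζ1 hζ2 using hζex
  have hθle : w 0 ≤ θ := by
    have h := Int.floor_le (((n:ℝ) * θ + φ - π/2)/π)
    rw [← hj₀_def] at h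
    have h2 : (j₀:ℝ) * π ≤ (n:ℝ)*θ + φ - π/2 := by
      rw [← le_div_iff₀ hπ]; exact h
    simp only [hw_def]
    rw [div_le_iff₀ hnR]
    push_cast
    nlinarith
  have hθlt1 : θ < w 1 := by
    have h := Int.lt_floor_add_one (((n:ℝ) * θ + φ - π/2)/π)
    rw [← hj₀_def] at h
    have h2 : (n:ℝ)*θ + φ - π/2 < ((j₀:ℝ)+1) * π := by
      rw [← div_lt_iff₀ hπ]; exact h
    simp only [hw_def]
    rw [lt_div_iff₀ hnR]
    push_cast
    nlinarith
  have hθmem : θ ∈ Set.Ioo (w 0) (w 1) := by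
    refine ⟨lt_of_le_of_ne hθle ?_, hθlt1⟩
    intro h
    exact hRwne 0 (by rw [← h] at hRθ; exact hRθ)
  set q : ℕ → ℝ := fun j => if j = 0 then θ else ζ j with hq_def
  have hqmem : ∀ j : ℕ, q j ∈ Set.Ioo (w j) (w (j+1)) := by
    intro j
    by_cases h : j = 0
    · subst h; simpa [hq_def] using hθmem
    · simpa [hq_def, h] using hζ1 j
  have hqzero : ∀ j : ℕ, R (q j) = 0 := by
    intro j
    by_cases h : j = 0
    · subst h; simpa [hq_def] using hRθ
    · simpa [hq_def, h] using hζ2 j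
  have hqlt : ∀ i j : ℕ, i < j → q i < q j := by
    intro i j hij
    calc q i < w (i+1) := (hqmem i).2
    _ ≤ w j := hwmono.monotone hij
    _ < q j := (hqmem j).1
  have hexpinj : ∀ i j : ℕ, i < 2*n → j < 2*n →
      Complex.exp ((q i : ℂ) * Complex.I) = Complex.exp ((q j : ℂ) * Complex.I) → i = j := by
    intro i j hi hj hij
    by_contra hne
    wlog hlt : i < j generalizing i j
    · exact this j i hj hi hij.symm (Ne.symm hne) (by omega)
    obtain ⟨m, hm⟩ := Complex.exp_eq_exp_iff_exists_int.1 hij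
    have him : (q i : ℝ) = q j + (m:ℝ) * (2*π) := by
      have := congrArg Complex.im hm
      simpa using this
    have hlow : 0 < q j - q i := sub_pos.2 (hqlt i j hlt)
    have hup : q j - q i < 2*π := by
      have h1 : q j < w (j+1) := (hqmem j).2
      have h2 : w 0 < q i := lt_of_le_of_lt (hwmono.monotone (Nat.zero_le i)) (hqmem i).1
      have h3 : w (j+1) ≤ w (2*n) := hwmono.monotone (by omega)
      rw [hw2n] at h3
      linarith
    have hmpos : (0:ℝ) < -(m:ℝ) := by nlinarith
    have hmlt : -(m:ℝ) < 1 := by nlinarith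
    have h0 : (0:ℤ) < -m := by exact_mod_cast hmpos
    have h1' : (-m:ℤ) < 1 := by exact_mod_cast hmlt
    omega
  have hPne : P ≠ 0 := by
    intro h
    have h0 := heval (w 0)
    rw [h] at h0
    simp only [Polynomial.eval_zero] at h0
    rcases mul_eq_zero.1 h0.symm with h' | h'
    · exact Complex.exp_ne_zero _ h'
    · exact hRwne 0 (by exact_mod_cast h')
  obtain ⟨Q₁, hQ₁⟩ := (Polynomial.dvd_iff_isRoot.2 hPz₀ : (Polynomial.X - Polynomial.C z₀) ∣ P)
  have hQ₁root : Q₁.eval z₀ = 0 := by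
    have h2 : P.derivative = Q₁ + (Polynomial.X - Polynomial.C z₀) * Q₁.derivative := by
      rw [hQ₁, Polynomial.derivative_mul]
      simp
    have h3 := congrArg (Polynomial.eval z₀) h2
    simp only [Polynomial.eval_add, Polynomial.eval_mul, Polynomial.eval_sub, Polynomial.eval_X,
      Polynomial.eval_C, sub_self, zero_mul, add_zero] at h3
    rw [hP'z₀] at h3
    exact h3.symm
  obtain ⟨Q, hQ⟩ := (Polynomial.dvd_iff_isRoot.2 hQ₁root : (Polynomial.X - Polynomial.C z₀) ∣ Q₁)
  have hPQ : P = (Polynomial.X - Polynomial.C z₀)^2 * Q := by rw [hQ₁, hQ]; ring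
  have hQne : Q ≠ 0 := by
    intro h
    rw [h, mul_zero] at hPQ
    exact hPne hPQ
  have hXsub_ne : (Polynomial.X - Polynomial.C z₀)^2 ≠ (0 : Polynomial ℂ) :=
    pow_ne_zero 2 (Polynomial.X_sub_C_ne_zero z₀)
  have hdegQ : Q.natDegree + 2 ≤ 2*n := by
    have hdp := hPdeg
    rw [hPQ, Polynomial.natDegree_mul hXsub_ne hQne, Polynomial.natDegree_pow,
      Polynomial.natDegree_X_sub_C] at hdp
    omega
  have hQroots : ∀ j : ℕ, 1 ≤ j → j < 2*n → Q.eval (Complex.exp ((q j : ℂ) * Complex.I)) = 0 := by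
    intro j hj1 hj2
    have hPq : P.eval (Complex.exp (((q j : ℝ) : ℂ) * Complex.I)) = 0 := by
      rw [heval (q j), hqzero j]
      simp
    rw [hPQ] at hPq
    simp only [Polynomial.eval_mul, Polynomial.eval_pow, Polynomial.eval_sub, Polynomial.eval_X,
      Polynomial.eval_C] at hPq
    rcases mul_eq_zero.1 hPq with h | h
    · exfalso
      have hz : Complex.exp ((q j : ℂ) * Complex.I) = z₀ := by
        have h' := pow_eq_zero_iff (two_ne_zero) |>.1 h
        rw [sub_eq_zero] at h'
        exact h'
      have hq0 : Complex.exp ((q 0 : ℂ) * Complex.I) = z₀ := by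
        simp [hq_def]
        exact hz₀_def.symm
      have : j = 0 := hexpinj j 0 hj2 (by omega) (by rw [hz, hq0])
      omega
    · exact h
  have hfin : 2*n - 1 ≤ Q.natDegree := by
    have hsub : Finset.image (fun j => Complex.exp ((q j : ℂ) * Complex.I)) (Finset.Icc 1 (2*n-1))
        ⊆ Q.roots.toFinset := by
      intro x hx
      obtain ⟨j, hj, rfl⟩ := Finset.mem_image.1 hx
      obtain ⟨hj1, hj2⟩ := Finset.mem_Icc.1 hj
      rw [Multiset.mem_toFinset, Polynomial.mem_roots']
      exact ⟨hQne, hQroots j hj1 (by omega)⟩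
    have hinj : Set.InjOn (fun j => Complex.exp ((q j : ℂ) * Complex.I))
        ↑(Finset.Icc 1 (2*n-1)) := by
      intro i hi j hj hij
      simp only [Finset.coe_Icc, Set.mem_Icc] at hi hj
      exact hexpinj i j (by omega) (by omega) hij
    calc 2*n-1 = (Finset.Icc 1 (2*n-1)).card := by rw [Nat.card_Icc]; omega
    _ = (Finset.image (fun j => Complex.exp ((q j : ℂ) * Complex.I)) (Finset.Icc 1 (2*n-1))).card :=
        (Finset.card_image_of_injOn hinj).symm
    _ ≤ Q.roots.toFinset.card := Finset.card_le_card hsub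
    _ ≤ Multiset.card Q.roots := Multiset.toFinset_card_le _
    _ ≤ Q.natDegree := Polynomial.card_roots' Q
  omega

/-- `T` is a real trigonometric polynomial of degree at most `n`. -/
def IsTrigPolyDeg (n : ℕ) (T : ℝ → ℝ) : Prop :=
  ∃ a b : ℕ → ℝ, ∀ θ : ℝ,
    T θ = a 0 + ∑ k ∈ Finset.Icc 1 n,
      (a k * Real.cos ((k : ℝ) * θ) + b k * Real.sin ((k : ℝ) * θ))

/-- Bernstein–Szegő inequality: if `T` is a real trigonometric polynomial of degree at most `n`
with `|T(θ)| ≤ 1` for all `θ`, then `T'(θ)² + n² T(θ)² ≤ n²` for all `θ`. -/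
theorem stmt9 (n : ℕ) (T : ℝ → ℝ) (hT : IsTrigPolyDeg n T)
    (hb : ∀ θ : ℝ, |T θ| ≤ 1) (θ : ℝ) :
    (deriv T θ) ^ 2 + (n : ℝ) ^ 2 * (T θ) ^ 2 ≤ (n : ℝ) ^ 2 := by
  exact stmt9' n T hT hb θ
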